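/- Completeness of the mixed-group signature scheme XSIG: let k₁, k₂ ∈ ℕ, let m : Fin k₁ → 𝔾₁ and m̃ : Fin k₂ → 𝔾₂ be a mixed-group message. Let σ₂ = (z, r, s, t, u, v, w) be the CSIG2 signature on m̃ computed with base points g_r, h_u ∈ 𝔾₁, g₂ ∈ 𝔾₂, secret scalars α, β, γ_z, δ_z, γ, δ and randomness ζ, ρ, τ, φ, ω (so in particular s = ρ • g_r ∈ 𝔾₁), and let σ₁ = (z′, r′, s′, t′, u′, v′, w′) be the dual CSIG1 signature on the extended vector m‖s ∈ 𝔾₁^{k₁+1} (obtained by appending s to m) computed with base points g′_r, h′_u ∈ 𝔾₂, g₁ ∈ 𝔾₁, secret scalars α′, β′, γ′_z, δ′_z, γ′, δ′ and randomness ζ′, ρ′, τ′, φ′, ω′, where all signature components are given by the signing formulas of the respective schemes. Then all four verification equations hold simultaneously: the two CSIG2 equations e(g_z, z) + e(g_r, r) + e(s·, t) + Σᵢ e(gᵢ, m̃ᵢ) = e(g_r, α • g₂) and e(h_z, z) + e(h_u, u) + e(v, w) + Σᵢ e(hᵢ, m̃ᵢ) = e(h_u, β • g₂) for σ₂ on m̃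 (with s· = s viewed in 𝔾₁), and the two CSIG1 equations e(z′, g′_z) + e(r′, g′_r) + e(t′, s′) + Σᵢ e((m‖s)ᵢ, g′ᵢ) = e(α′ • g₁, g′_r) and e(z′, h′_z) + e(u′, h′_u) + e(w′, v′) + Σᵢ e((m‖s)ᵢ, h′ᵢ) = e(β′ • g₁, h′_u) for σ₁ on m‖s; hence XSIG.Verify outputs 1 on every honestly generated XSIG signature. -/
import Mathlib


/-- Completeness of the mixed-group structure-preserving signature scheme XSIG:
an honestly generated XSIG signature `(σ₁, σ₂)` on a mixed-group message
`(m, m̃) ∈ 𝔾₁^{k₁} × 𝔾₂^{k₂}` — where `σ₂` is the CSIG2 signature on `m̃`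
and `σ₁` is the dual CSIG1 signature on the extended vector `m‖s` —
satisfies all four verification equations, so `XSIG.Verify` outputs 1. -/
theorem xsig_verify_complete {R : Type*} [CommRing R]
    {G₁ G₂ G₃ : Type*} [AddCommGroup G₁] [AddCommGroup G₂] [AddCommGroup G₃]
    [Module R G₁] [Module R G₂] [Module R G₃]
    (e : G₁ →ₗ[R] G₂ →ₗ[R] G₃)
    (k₁ k₂ : ℕ) (m : Fin k₁ → G₁) (mt : Fin k₂ → G₂)
    -- CSIG2 keys, randomness and signature components
    (g_r h_u : G₁) (g₂ : G₂)
    (α β γ_z δ_z ζ ρ τ φ ω : R) (γ δ : Fin k₂ → R)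
    (g_z h_z s v : G₁) (gi hi : Fin k₂ → G₁) (z r t u w : G₂)
    (hg_z : g_z = γ_z • g_r) (hh_z : h_z = δ_z • h_u)
    (hgi : ∀ i, gi i = γ i • g_r) (hhi : ∀ i, hi i = δ i • h_u)
    (hz : z = ζ • g₂)
    (hr : r = (α - ρ * τ - γ_z * ζ) • g₂ - ∑ i, γ i • mt i)
    (hs : s = ρ • g_r)
    (ht : t = τ • g₂)
    (hu : u = (β - φ * ω - δ_z * ζ) • g₂ - ∑ i, δ i • mt i)
    (hv : v = φ • h_u)
    (hw : w = ω • g₂)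
    -- the extended message m‖s ∈ 𝔾₁^{k₁+1}
    (ms : Fin (k₁ + 1) → G₁)
    (hms : ms = Fin.snoc m s)
    -- CSIG1 (dual) keys, randomness and signature components
    (g_r' h_u' : G₂) (g₁ : G₁)
    (α' β' γ_z' δ_z' ζ' ρ' τ' φ' ω' : R) (γ' δ' : Fin (k₁ + 1) → R)
    (g_z' h_z' s' v' : G₂) (gi' hi' : Fin (k₁ + 1) → G₂) (z' r' t' u' w' : G₁)
    (hg_z' : g_z' = γ_z' • g_r') (hh_z' : h_z' = δ_z' • h_u')
    (hgi' : ∀ i, gi' i = γ' i • g_r') (hhi' : ∀ i, hi' i = δ' i • h_u')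
    (hz' : z' = ζ' • g₁)
    (hr' : r' = (α' - ρ' * τ' - γ_z' * ζ') • g₁ - ∑ i, γ' i • ms i)
    (hs' : s' = ρ' • g_r')
    (ht' : t' = τ' • g₁)
    (hu' : u' = (β' - φ' * ω' - δ_z' * ζ') • g₁ - ∑ i, δ' i • ms i)
    (hv' : v' = φ' • h_u')
    (hw' : w' = ω' • g₁) :
    (e g_z z + e g_r r + e s t + ∑ i, e (gi i) (mt i) = e g_r (α • g₂)) ∧
    (e h_z z + e h_u u + e v w + ∑ i, e (hi i) (mt i) = e h_u (β • g₂)) ∧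
    (e z' g_z' + e r' g_r' + e t' s' + ∑ i, e (ms i) (gi' i) = e (α' • g₁) g_r') ∧
    (e z' h_z' + e u' h_u' + e w' v' + ∑ i, e (ms i) (hi' i) = e (β' • g₁) h_u') := by
  subst hg_z hh_z hz hr hs ht hu hv hw hg_z' hh_z' hz' hr' hs' ht' hu' hv' hw' hms
  refine ⟨?_, ?_, ?_, ?_⟩ <;>
  · simp only [hgi, hhi, hgi', hhi', map_smul, map_sub, map_sum, LinearMap.sub_apply,
      LinearMap.smul_apply, LinearMap.sum_apply, smul_smul, sub_smul, smul_sub,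
      Finset.smul_sum]
    module
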